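/- arXiv:1807.05241 — 9 statements merged into one kernel-verified Lean document; each statement's English description precedes it below -/
import Mathlib

section
/- For every nonzero vector v ∈ ℝ₊^k, it holds that ‖v‖₁ − ‖v‖_∞ ≤ I_Gini(v) ≤ 2(‖v‖₁ − ‖v‖_∞), where I_Gini(v) = ‖v‖₁ Σ_{i=1}^k (vᵢ/‖v‖₁)(1 − vᵢ/‖v‖₁). -/
/-- Gini impurity bounds: for every nonzero `v ∈ ℝ₊^k`,
`‖v‖₁ − ‖v‖_∞ ≤ I_Gini(v) ≤ 2(‖v‖₁ − ‖v‖_∞)`. -/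
theorem stmt7 {k : ℕ} [NeZero k] (v : Fin k → ℝ) (hv : ∀ i, 0 ≤ v i) (hv0 : v ≠ 0) :
    (∑ i, v i) - Finset.univ.sup' Finset.univ_nonempty v ≤
      (∑ i, v i) * ∑ i, (v i / ∑ j, v j) * (1 - v i / ∑ j, v j) ∧
    (∑ i, v i) * ∑ i, (v i / ∑ j, v j) * (1 - v i / ∑ j, v j) ≤
      2 * ((∑ i, v i) - Finset.univ.sup' Finset.univ_nonempty v) := by
  set S : ℝ := ∑ i, v i with hSdef
  have hS : 0 < S := by
    rcases Function.ne_iff.mp hv0 with ⟨i, hi⟩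
    have hi' : 0 < v i := lt_of_le_of_ne (hv i) (Ne.symm hi)
    exact Finset.sum_pos' (fun j _ => hv j) ⟨i, Finset.mem_univ i, hi'⟩
  set M : ℝ := Finset.univ.sup' Finset.univ_nonempty v with hMdef
  obtain ⟨i0, -, hi0⟩ := Finset.exists_mem_eq_sup' Finset.univ_nonempty v
  have hle : ∀ i, v i ≤ M := fun i => Finset.le_sup' v (Finset.mem_univ i)
  have hQ1 : ∑ i, (v i)^2 ≤ M * S := by
    rw [hSdef, Finset.mul_sum]
    exact Finset.sum_le_sum fun i _ => by
      have := mul_le_mul_of_nonneg_right (hle i) (hv i); nlinarith [this]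
  have hQ2 : M^2 ≤ ∑ i, (v i)^2 := by
    rw [hMdef, hi0]
    exact Finset.single_le_sum (fun i _ => sq_nonneg (v i)) (Finset.mem_univ i0)
  have key : S * ∑ i, (v i / S) * (1 - v i / S) = S - (∑ i, (v i)^2) / S := by
    have h1 : ∑ i, (v i / S) * (1 - v i / S)
        = (∑ i, v i) / S - (∑ i, (v i)^2) / S^2 := by
      rw [Finset.sum_div, Finset.sum_div, ← Finset.sum_sub_distrib]
      exact Finset.sum_congr rfl fun i _ => by field_simp
    rw [h1, ← hSdef]
    field_simp
  rw [key]
  constructor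
  · have : (∑ i, (v i)^2) / S ≤ M := by
      rw [div_le_iff₀ hS]; exact hQ1
    linarith
  · have h2 : 2 * M - S ≤ (∑ i, (v i)^2) / S := by
      rw [le_div_iff₀ hS]
      nlinarith [sq_nonneg (S - M)]
    linarith
end

section
/- For every nonzero v ∈ ℝ₊^k with ‖v‖₁ > ‖v‖_∞, the entropy impurity I_Ent(v) = Σᵢ vᵢ log(‖v‖₁/vᵢ) satisfies (‖v‖₁ − ‖v‖_∞)·log(‖v‖₁ / min{‖v‖₁ − ‖v‖_∞, ‖v‖_∞}) ≤ I_Ent(v) ≤ 2(‖v‖₁ − ‖v‖_∞)·log(k·‖v‖₁ / (‖v‖₁ − ‖v‖_∞)). -/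
/-- Entropy impurity (log base 2), with the convention `0·log(·/0) = 0`. -/
noncomputable def IEnt {m : ℕ} (w : Fin m → ℝ) : ℝ :=
  ∑ i, w i * Real.logb 2 ((∑ j, w j) / w i)

/-- ℓ∞ norm (max coordinate) of a nonnegative vector. -/
noncomputable def linf {m : ℕ} [NeZero m] (w : Fin m → ℝ) : ℝ :=
  Finset.univ.sup' Finset.univ_nonempty w

/-- Entropy impurity bounds: for nonzero `v ∈ ℝ₊^k` with `‖v‖₁ > ‖v‖_∞`,
`(‖v‖₁ − ‖v‖_∞)·log(‖v‖₁ / min{‖v‖₁ − ‖v‖_∞, ‖v‖_∞}) ≤ I_Ent(v) ≤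
 2(‖v‖₁ − ‖v‖_∞)·log(k·‖v‖₁ / (‖v‖₁ − ‖v‖_∞))`. -/
theorem stmt8 {k : ℕ} [NeZero k] (v : Fin k → ℝ) (hv : ∀ i, 0 ≤ v i)
    (h : linf v < ∑ i, v i) :
    ((∑ i, v i) - linf v) *
        Real.logb 2 ((∑ i, v i) / min ((∑ i, v i) - linf v) (linf v)) ≤ IEnt v ∧
    IEnt v ≤ 2 * ((∑ i, v i) - linf v) *
        Real.logb 2 ((k : ℝ) * (∑ i, v i) / ((∑ i, v i) - linf v)) := by
  obtain ⟨i₀, -, hi₀⟩ := Finset.exists_mem_eq_sup' (Finset.univ_nonempty (α := Fin k)) v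
  set S := ∑ i, v i with hSdef
  set M := linf v with hMdef
  have hMv : M = v i₀ := hi₀
  have hvle : ∀ i, v i ≤ M := fun i => Finset.le_sup' v (Finset.mem_univ i)
  have hM0 : 0 ≤ M := hMv ▸ hv i₀
  have hS0 : 0 < S := lt_of_le_of_lt hM0 h
  have hk0 : (0 : ℝ) < k := Nat.cast_pos.mpr (NeZero.pos k)
  have hSkM : S ≤ k * M := by
    calc S = ∑ i : Fin k, v i := rfl
      _ ≤ ∑ _i : Fin k, M := Finset.sum_le_sum fun i _ => hvle i
      _ = k * M := by simp [mul_comm]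
  have hMpos : 0 < M := by nlinarith
  have hMS : M < S := h
  have hR : 0 < S - M := sub_pos.mpr hMS
  have hsum_erase : ∑ i ∈ Finset.univ.erase i₀, v i = S - M := by
    rw [Finset.sum_erase_eq_sub (Finset.mem_univ i₀), ← hMv]
  have hvS : ∀ i, v i ≤ S := fun i => (hvle i).trans hMS.le
  have hterm_nonneg : ∀ i, 0 ≤ v i * Real.logb 2 (S / v i) := by
    intro i
    rcases eq_or_lt_of_le (hv i) with h0 | h0
    · simp [← h0]
    · exact mul_nonneg (hv i) (Real.logb_nonneg one_lt_two ((one_le_div h0).mpr (hvS i)))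
  have hIEnt : IEnt v = ∑ i, v i * Real.logb 2 (S / v i) := rfl
  have hk2 : 2 ≤ k := by
    by_contra hlt
    push_neg at hlt
    have hk1' : k = 1 := by have := NeZero.pos k; omega
    have huniv : (Finset.univ : Finset (Fin k)) = {i₀} := by
      apply Finset.eq_singleton_iff_unique_mem.mpr
      refine ⟨Finset.mem_univ _, fun x _ => ?_⟩
      subst hk1'
      exact Subsingleton.elim x i₀
    have : S = M := by rw [hSdef, huniv, Finset.sum_singleton, hMv]
    linarith
  constructor
  · -- lower bound
    rcases le_total M (S - M) with hmin | hmin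
    · rw [min_eq_right hmin]
      have hlogastar : 0 ≤ Real.logb 2 (S / M) :=
        Real.logb_nonneg one_lt_two ((one_le_div hMpos).mpr hMS.le)
      calc (S - M) * Real.logb 2 (S / M)
          ≤ S * Real.logb 2 (S / M) :=
            mul_le_mul_of_nonneg_right (by linarith) hlogastar
        _ = ∑ i, v i * Real.logb 2 (S / M) := by rw [← Finset.sum_mul]
        _ ≤ ∑ i, v i * Real.logb 2 (S / v i) := by
            apply Finset.sum_le_sum
            intro i _
            rcases eq_or_lt_of_le (hv i) with h0 | h0
            · simp [← h0]
            · apply mul_le_mul_of_nonneg_left _ (hv i)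
              apply Real.logb_le_logb_of_le one_lt_two (div_pos hS0 hMpos)
              exact div_le_div_of_nonneg_left hS0.le h0 (hvle i)
        _ = IEnt v := hIEnt.symm
    · rw [min_eq_left hmin]
      have key : (S - M) * Real.logb 2 (S / (S - M))
          ≤ ∑ i ∈ Finset.univ.erase i₀, v i * Real.logb 2 (S / v i) := by
        calc (S - M) * Real.logb 2 (S / (S - M))
            = ∑ i ∈ Finset.univ.erase i₀, v i * Real.logb 2 (S / (S - M)) := by
              rw [← Finset.sum_mul, hsum_erase]
          _ ≤ ∑ i ∈ Finset.univ.erase i₀, v i * Real.logb 2 (S / v i) := by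
              apply Finset.sum_le_sum
              intro i hi
              rcases eq_or_lt_of_le (hv i) with h0 | h0
              · simp [← h0]
              · apply mul_le_mul_of_nonneg_left _ (hv i)
                apply Real.logb_le_logb_of_le one_lt_two (div_pos hS0 hR)
                apply div_le_div_of_nonneg_left hS0.le h0
                calc v i ≤ ∑ j ∈ Finset.univ.erase i₀, v j :=
                      Finset.single_le_sum (fun j _ => hv j) hi
                  _ = S - M := hsum_erase
      calc (S - M) * Real.logb 2 (S / (S - M))
          ≤ ∑ i ∈ Finset.univ.erase i₀, v i * Real.logb 2 (S / v i) := key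
        _ ≤ v i₀ * Real.logb 2 (S / v i₀)
              + ∑ i ∈ Finset.univ.erase i₀, v i * Real.logb 2 (S / v i) := by
            linarith [hterm_nonneg i₀]
        _ = ∑ i, v i * Real.logb 2 (S / v i) :=
            Finset.add_sum_erase _ (fun i => v i * Real.logb 2 (S / v i)) (Finset.mem_univ i₀)
        _ = IEnt v := hIEnt.symm
  · -- upper bound
    have hlog2 : 0 < Real.log 2 := Real.log_pos one_lt_two
    have hkSR : (4 : ℝ) ≤ (k : ℝ) * S / (S - M) := by
      rw [le_div_iff₀ hR]
      nlinarith [sq_nonneg ((k : ℝ) - 2), mul_le_mul_of_nonneg_left hSkM hk0.le]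
    have hkSRpos : 0 < (k : ℝ) * S / (S - M) := by positivity
    have hlog1 : 1 ≤ Real.log ((k : ℝ) * S / (S - M)) := by
      rw [Real.le_log_iff_exp_le hkSRpos]
      calc Real.exp 1 ≤ 2.7182818286 := Real.exp_one_lt_d9.le
        _ ≤ 4 := by norm_num
        _ ≤ _ := hkSR
    -- the max term, in natural-log form
    have hmaxterm : v i₀ * Real.log (S / v i₀) ≤ (S - M) * Real.log ((k : ℝ) * S / (S - M)) := by
      rw [← hMv]
      have h1 : Real.log (S / M) ≤ S / M - 1 :=
        Real.log_le_sub_one_of_pos (div_pos hS0 hMpos)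
      have h2 : M * (S / M - 1) = S - M := by field_simp
      nlinarith [mul_le_mul_of_nonneg_left hlog1 hR.le]
    -- Jensen for the remaining terms
    set t := (Finset.univ.erase i₀).filter (fun i => v i ≠ 0) with htdef
    have hsum_t : ∑ i ∈ t, v i = S - M := by
      rw [htdef, Finset.sum_filter_ne_zero, hsum_erase]
    have ht_ne : t.Nonempty := by
      rw [Finset.nonempty_iff_ne_empty]
      intro hemp
      rw [hemp, Finset.sum_empty] at hsum_t
      linarith
    have ht_pos : ∀ i ∈ t, 0 < v i := fun i hi =>
      (hv i).lt_of_ne (Ne.symm (Finset.mem_filter.mp hi).2)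
    have jensen : ∑ i ∈ t, (v i / (S - M)) * Real.log (S / v i)
        ≤ Real.log (∑ i ∈ t, (v i / (S - M)) * (S / v i)) := by
      have := (strictConcaveOn_log_Ioi.concaveOn).le_map_sum
        (t := t) (w := fun i => v i / (S - M)) (p := fun i => S / v i)
        (fun i _ => div_nonneg (hv i) hR.le)
        (by rw [← Finset.sum_div, hsum_t, div_self hR.ne'])
        (fun i hi => Set.mem_Ioi.mpr (div_pos hS0 (ht_pos i hi)))
      simpa [smul_eq_mul] using this
    have hinner : ∑ i ∈ t, (v i / (S - M)) * (S / v i) = (t.card : ℝ) * (S / (S - M)) := by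
      rw [Finset.sum_congr rfl (fun i hi => ?_), Finset.sum_const, nsmul_eq_mul]
      have h0 := (ht_pos i hi).ne'
      field_simp
    have hcard : (t.card : ℝ) ≤ (k : ℝ) := by
      have h1 : t.card ≤ k := by
        simpa using Finset.card_le_univ t
      exact_mod_cast h1
    have hcard1 : (1 : ℝ) ≤ (t.card : ℝ) := by
      exact_mod_cast Finset.card_pos.mpr ht_ne
    have hresterm : ∑ i ∈ Finset.univ.erase i₀, v i * Real.log (S / v i)
        ≤ (S - M) * Real.log ((k : ℝ) * S / (S - M)) := by
      have hfilter : ∑ i ∈ Finset.univ.erase i₀, v i * Real.log (S / v i)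
          = ∑ i ∈ t, v i * Real.log (S / v i) := by
        rw [htdef]
        refine (Finset.sum_filter_of_ne ?_).symm
        intro x _ hx h0
        exact hx (by simp [h0])
      have hfac : ∑ i ∈ t, v i * Real.log (S / v i)
          = (S - M) * ∑ i ∈ t, (v i / (S - M)) * Real.log (S / v i) := by
        rw [Finset.mul_sum]
        apply Finset.sum_congr rfl
        intro i _
        field_simp
      rw [hfilter, hfac]
      apply mul_le_mul_of_nonneg_left _ hR.le
      calc ∑ i ∈ t, (v i / (S - M)) * Real.log (S / v i)
          ≤ Real.log (∑ i ∈ t, (v i / (S - M)) * (S / v i)) := jensen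
        _ = Real.log ((t.card : ℝ) * (S / (S - M))) := by rw [hinner]
        _ ≤ Real.log ((k : ℝ) * S / (S - M)) := by
            apply Real.log_le_log (by positivity)
            rw [mul_div_assoc]
            exact mul_le_mul_of_nonneg_right hcard (by positivity)
    -- combine, in natural-log form
    have main_log : ∑ i, v i * Real.log (S / v i)
        ≤ 2 * (S - M) * Real.log ((k : ℝ) * S / (S - M)) := by
      have hsplit : ∑ i, v i * Real.log (S / v i)
          = v i₀ * Real.log (S / v i₀)
            + ∑ i ∈ Finset.univ.erase i₀, v i * Real.log (S / v i) :=
        (Finset.add_sum_erase _ (fun i => v i * Real.log (S / v i)) (Finset.mem_univ i₀)).symm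
      rw [hsplit]
      linarith
    -- convert to logb
    have hconv : IEnt v = (∑ i, v i * Real.log (S / v i)) / Real.log 2 := by
      rw [hIEnt, Finset.sum_div]
      apply Finset.sum_congr rfl
      intro i _
      rw [Real.logb]
      ring
    have hconv2 : 2 * (S - M) * Real.logb 2 ((k : ℝ) * S / (S - M))
        = (2 * (S - M) * Real.log ((k : ℝ) * S / (S - M))) / Real.log 2 := by
      rw [Real.logb]
      ring
    rw [hconv, hconv2]
    gcongr
end

section
/- For every nonzero v ∈ ℝ₊^k and every coordinate i ∈ {1,…,k}, the entropy impurity satisfies (‖v‖₁ − ‖v‖_∞)·max{1, log(‖v‖₁/(‖v‖₁ − ‖v‖_∞))} ≤ I_Ent(v) ≤ 2(‖v‖₁ − vᵢ)·log(2k‖v‖₁/(‖v‖₁ − vᵢ)), where the left inequality assumes ‖v‖₁ > ‖v‖_∞ and the right inequality assumes ‖v‖₁ > vᵢ. -/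
private lemma log2_pos : (0:ℝ) < Real.log 2 := Real.log_pos (by norm_num)

private lemma log2_lt_one : Real.log 2 < 1 := by
  have := Real.log_two_lt_d9; linarith

/-- subadditivity of `x ↦ x * logb 2 (S/x)`. -/
private lemma f_subadd {S a b : ℝ} (hS : 0 < S) (ha : 0 ≤ a) (hb : 0 ≤ b) :
    (a + b) * Real.logb 2 (S / (a+b)) ≤
      a * Real.logb 2 (S / a) + b * Real.logb 2 (S / b) := by
  rcases eq_or_lt_of_le ha with h|ha
  · simp [← h]
  rcases eq_or_lt_of_le hb with h|hb
  · simp [← h]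
  have hab : 0 < a + b := by linarith
  rw [Real.logb_div (ne_of_gt hS) (ne_of_gt ha), Real.logb_div (ne_of_gt hS) (ne_of_gt hb),
      Real.logb_div (ne_of_gt hS) (ne_of_gt hab)]
  have h1 : Real.logb 2 a ≤ Real.logb 2 (a+b) :=
    Real.logb_le_logb_of_le (by norm_num) ha (by linarith)
  have h2 : Real.logb 2 b ≤ Real.logb 2 (a+b) :=
    Real.logb_le_logb_of_le (by norm_num) hb (by linarith)
  nlinarith

private lemma f_sum {k : ℕ} {S : ℝ} (hS : 0 < S) (v : Fin k → ℝ) (hv : ∀ j, 0 ≤ v j)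
    (T : Finset (Fin k)) :
    (∑ j ∈ T, v j) * Real.logb 2 (S / ∑ j ∈ T, v j) ≤
      ∑ j ∈ T, v j * Real.logb 2 (S / v j) := by
  induction T using Finset.cons_induction with
  | empty => simp
  | cons a T haT ih =>
    rw [Finset.sum_cons, Finset.sum_cons]
    calc (v a + ∑ j ∈ T, v j) * Real.logb 2 (S / (v a + ∑ j ∈ T, v j))
        ≤ v a * Real.logb 2 (S / v a)
            + (∑ j ∈ T, v j) * Real.logb 2 (S / ∑ j ∈ T, v j) :=
          f_subadd hS (hv a) (Finset.sum_nonneg fun j _ => hv j)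
      _ ≤ _ := by linarith

/-- per-term upper bound with budget `C`. -/
private lemma term_upper {S C x : ℝ} (hS : 0 < S) (hC : 0 < C) (hx : 0 ≤ x) :
    x * Real.logb 2 (S / x) ≤ x * Real.logb 2 C + (S / C - x) / Real.log 2 := by
  rcases eq_or_lt_of_le hx with h|hx
  · simp only [← h, zero_mul, zero_add, sub_zero]
    positivity
  have hsplit : Real.logb 2 (S / x) = Real.logb 2 (S / (x * C)) + Real.logb 2 C := by
    rw [← Real.logb_mul (by positivity) (ne_of_gt hC)]
    congr 1
    field_simp
  rw [hsplit, mul_add]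
  have h1 : Real.log (S / (x * C)) ≤ S / (x * C) - 1 :=
    Real.log_le_sub_one_of_pos (by positivity)
  have h2 : x * Real.logb 2 (S / (x * C)) ≤ (S / C - x) / Real.log 2 := by
    rw [Real.logb, ← mul_div_assoc]
    have h3 : x * (S / (x * C) - 1) = S / C - x := by field_simp
    have h4 : x * Real.log (S / (x * C)) ≤ S / C - x := by nlinarith
    exact div_le_div_of_nonneg_right h4 log2_pos.le
  linarith

private lemma term_nonneg {S x : ℝ} (hS : 0 < S) (hx : 0 ≤ x) (hxS : x ≤ S) :
    0 ≤ x * Real.logb 2 (S / x) := by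
  rcases eq_or_lt_of_le hx with h|hx
  · simp [← h]
  · exact mul_nonneg hx.le (Real.logb_nonneg (by norm_num) ((one_le_div hx).mpr hxS))

/-- For nonzero `v ∈ ℝ₊^k` and a coordinate `i`:
if `‖v‖₁ > ‖v‖_∞` then `(‖v‖₁ − ‖v‖_∞)·max{1, log(‖v‖₁/(‖v‖₁ − ‖v‖_∞))} ≤ I_Ent(v)`;
if `‖v‖₁ > vᵢ` then `I_Ent(v) ≤ 2(‖v‖₁ − vᵢ)·log(2k‖v‖₁/(‖v‖₁ − vᵢ))`. -/
theorem stmt9 {k : ℕ} [NeZero k] (v : Fin k → ℝ) (hv : ∀ j, 0 ≤ v j) (hv0 : v ≠ 0)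
    (i : Fin k) :
    ((linf v < ∑ j, v j) →
      ((∑ j, v j) - linf v) *
          max 1 (Real.logb 2 ((∑ j, v j) / ((∑ j, v j) - linf v))) ≤ IEnt v) ∧
    ((v i < ∑ j, v j) →
      IEnt v ≤ 2 * ((∑ j, v j) - v i) *
          Real.logb 2 (2 * (k : ℝ) * (∑ j, v j) / ((∑ j, v j) - v i))) := by
  classical
  set S := ∑ j, v j with hSdef
  have hS0 : 0 < S := by
    obtain ⟨j, hj⟩ := Function.ne_iff.mp hv0
    exact Finset.sum_pos' (fun l _ => hv l)
      ⟨j, Finset.mem_univ j, lt_of_le_of_ne (hv j) (Ne.symm hj)⟩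
  have hIent : IEnt v = ∑ j, v j * Real.logb 2 (S / v j) := rfl
  have hjS : ∀ j, v j ≤ S := fun j =>
    Finset.single_le_sum (fun l _ => hv l) (Finset.mem_univ j)
  constructor
  · intro hM
    set M := linf v with hMdef
    have hle : ∀ j, v j ≤ M := fun j => Finset.le_sup' v (Finset.mem_univ j)
    have hM0 : 0 < M := by
      obtain ⟨j, hj⟩ := Function.ne_iff.mp hv0
      exact lt_of_lt_of_le (lt_of_le_of_ne (hv j) (Ne.symm hj)) (hle j)
    have hR : 0 < S - M := by linarith
    rw [mul_max_of_nonneg _ _ hR.le]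
    apply max_le
    · rw [mul_one, hIent]
      have step1 : S * Real.logb 2 (S / M) ≤ ∑ j, v j * Real.logb 2 (S / v j) := by
        calc S * Real.logb 2 (S / M) = ∑ j, v j * Real.logb 2 (S / M) := by
              rw [← Finset.sum_mul]
          _ ≤ ∑ j, v j * Real.logb 2 (S / v j) := by
              apply Finset.sum_le_sum
              intro j _
              rcases eq_or_lt_of_le (hv j) with h|h
              · simp [← h]
              · apply mul_le_mul_of_nonneg_left _ (hv j)
                apply Real.logb_le_logb_of_le (by norm_num) (by positivity)
                exact div_le_div_of_nonneg_left hS0.le h (hle j)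
      have step2 : S - M ≤ S * Real.logb 2 (S / M) := by
        have h1 : Real.log (M / S) ≤ M / S - 1 :=
          Real.log_le_sub_one_of_pos (by positivity)
        have h2 : 1 - M / S ≤ Real.log (S / M) := by
          have hh : Real.log (S / M) = -Real.log (M / S) := by
            rw [← Real.log_inv, inv_div]
          linarith
        have hMS1 : M / S ≤ 1 := (div_le_one hS0).mpr hM.le
        have h4 : 1 - M / S ≤ Real.logb 2 (S / M) := by
          rw [Real.logb, le_div_iff₀ log2_pos]
          nlinarith [log2_lt_one, log2_pos]
        have h5 : S * (1 - M / S) = S - M := by field_simp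
        nlinarith [h4, hS0]
      linarith
    · obtain ⟨j0, _, hj0⟩ := Finset.exists_mem_eq_sup' Finset.univ_nonempty v
      have hMj0 : M = v j0 := hj0
      have hsum_erase : ∑ j ∈ Finset.univ.erase j0, v j = S - M := by
        have := Finset.add_sum_erase Finset.univ v (Finset.mem_univ j0)
        rw [hMj0]; linarith [this]
      have h1 := f_sum hS0 v hv (Finset.univ.erase j0)
      rw [hsum_erase] at h1
      have h2 : ∑ j ∈ Finset.univ.erase j0, v j * Real.logb 2 (S / v j)
          ≤ ∑ j, v j * Real.logb 2 (S / v j) := by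
        apply Finset.sum_le_sum_of_subset_of_nonneg (Finset.subset_univ _)
        intro x _ _
        exact term_nonneg hS0 (hv x) (hjS x)
      rw [hIent]
      linarith
  · intro hiS
    have hD : 0 < S - v i := by linarith
    have hk2 : (2:ℝ) ≤ (k:ℝ) := by
      have hk1 : 1 < k := by
        by_contra h
        have hk : k = 1 := by
          have := Nat.pos_of_ne_zero (NeZero.ne k); omega
        subst hk
        have hSi : S = v i := by
          rw [hSdef, Fin.sum_univ_one]
          exact congrArg v (Subsingleton.elim 0 i)
        linarith
      exact_mod_cast hk1
    set C := 2 * (k:ℝ) * S / (S - v i) with hC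
    have hC4 : (4:ℝ) ≤ C := by
      rw [hC, le_div_iff₀ hD]
      nlinarith [hv i, hS0]
    have hC0 : (0:ℝ) < C := by linarith
    have hhead : v i * Real.logb 2 (S / v i) ≤ (S - v i) / Real.log 2 := by
      rcases eq_or_lt_of_le (hv i) with h|h
      · simp [← h]
        positivity
      · have h1 : Real.log (S / v i) ≤ S / v i - 1 :=
          Real.log_le_sub_one_of_pos (by positivity)
        rw [Real.logb, ← mul_div_assoc]
        apply div_le_div_of_nonneg_right _ log2_pos.le
        have he : v i * (S / v i - 1) = S - v i := by field_simp
        nlinarith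
    have hsumerase : ∑ j ∈ Finset.univ.erase i, v j = S - v i := by
      have := Finset.add_sum_erase Finset.univ v (Finset.mem_univ i)
      linarith [this]
    have hSC : S / C = (S - v i) / (2 * (k:ℝ)) := by
      rw [hC]
      field_simp
    have hrest : ∑ j ∈ Finset.univ.erase i, v j * Real.logb 2 (S / v j)
        ≤ (S - v i) * Real.logb 2 C := by
      calc ∑ j ∈ Finset.univ.erase i, v j * Real.logb 2 (S / v j)
          ≤ ∑ j ∈ Finset.univ.erase i,
              (v j * Real.logb 2 C + (S / C - v j) / Real.log 2) :=
            Finset.sum_le_sum fun j _ => term_upper hS0 hC0 (hv j)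
        _ = (S - v i) * Real.logb 2 C
            + (((Finset.univ.erase i).card : ℝ) * (S / C) - (S - v i)) / Real.log 2 := by
            rw [Finset.sum_add_distrib, ← Finset.sum_mul, hsumerase, ← Finset.sum_div,
              Finset.sum_sub_distrib, Finset.sum_const, hsumerase, nsmul_eq_mul]
        _ ≤ (S - v i) * Real.logb 2 C := by
            have hcard : ((Finset.univ.erase i).card : ℝ) ≤ (k:ℝ) := by
              have := Finset.card_erase_le (a := i) (s := (Finset.univ : Finset (Fin k)))
              have h2 : (Finset.univ : Finset (Fin k)).card = k := by
                rw [Finset.card_univ, Fintype.card_fin]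
              exact_mod_cast le_trans this (le_of_eq h2)
            have hnum : ((Finset.univ.erase i).card : ℝ) * (S / C) - (S - v i) ≤ 0 := by
              rw [hSC]
              have h1 : ((Finset.univ.erase i).card : ℝ) * ((S - v i) / (2 * k)) ≤
                  (k:ℝ) * ((S - v i) / (2 * k)) := by
                apply mul_le_mul_of_nonneg_right hcard
                positivity
              have h2 : (k:ℝ) * ((S - v i) / (2 * k)) = (S - v i) / 2 := by
                field_simp
              nlinarith
            have := div_nonpos_of_nonpos_of_nonneg hnum log2_pos.le
            linarith
    have hhead2 : (S - v i) / Real.log 2 ≤ (S - v i) * Real.logb 2 C := by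
      have hlog : 1 ≤ Real.log C := by
        rw [Real.le_log_iff_exp_le hC0]
        have := Real.exp_one_lt_d9
        linarith
      have h6 : 1 / Real.log 2 ≤ Real.logb 2 C :=
        div_le_div_of_nonneg_right hlog log2_pos.le
      calc (S - v i) / Real.log 2 = (S - v i) * (1 / Real.log 2) := by ring
        _ ≤ (S - v i) * Real.logb 2 C := mul_le_mul_of_nonneg_left h6 hD.le
    rw [hIent, ← Finset.add_sum_erase _ _ (Finset.mem_univ i)]
    calc v i * Real.logb 2 (S / v i)
          + ∑ j ∈ Finset.univ.erase i, v j * Real.logb 2 (S / v j)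
        ≤ (S - v i) / Real.log 2 + (S - v i) * Real.logb 2 C := by
          exact add_le_add hhead hrest
      _ ≤ 2 * (S - v i) * Real.logb 2 C := by linarith
end

section
/- Let u ∈ ℝ₊^k with u₁ ≥ u₂ ≥ ⋯ ≥ u_k > 0. Let z⁽¹⁾, z⁽²⁾ ∈ {0,1}^k be nonzero orthogonal vectors, let i* = min{ i : z⁽¹⁾ᵢ = 1 or z⁽²⁾ᵢ = 1 }, and set v⁽¹⁾ = e_{i*} and v⁽²⁾ = z⁽¹⁾ + z⁽²⁾ − e_{i*} (assume v⁽²⁾ ≠ 0). Then I_Gini(u ∘ v⁽¹⁾) + I_Gini(u ∘ v⁽²⁾) ≤ I_Gini(u ∘ z⁽¹⁾) + I_Gini(u ∘ z⁽²⁾). -/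
/-- Gini impurity in the form `I_Gini(w) = ‖w‖₁ − (Σᵢ wᵢ²)/‖w‖₁` (equal to `0` when `w = 0`). -/
noncomputable def IG {k : ℕ} (w : Fin k → ℝ) : ℝ :=
  (∑ i, w i) - (∑ i, (w i) ^ 2) / (∑ i, w i)

lemma key' (a s1 s2 q1 q2 : ℝ) (ha : 0 < a) (has1 : a ≤ s1) (hs2 : 0 < s2)
    (hq1a : a^2 ≤ q1) (hq1 : q1 ≤ a * s1) (hq2a : q2 ≤ a * s2)
    (hq2s : q2 ≤ s2^2) :
    (s1 + s2 - a) - (q1 + q2 - a^2)/(s1 + s2 - a) ≤ (s1 - q1/s1) + (s2 - q2/s2) := by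
  have hs1 : 0 < s1 := lt_of_lt_of_le ha has1
  have h3 : 0 < s1 + s2 - a := by linarith
  have hED : q2*(s1-a) - (q1-a^2)*s2 ≤ s2*(a*s1-q1) := by
    nlinarith [mul_le_mul_of_nonneg_right hq2a (sub_nonneg.2 has1)]
  have hpoly : (q2*(s1-a) - (q1-a^2)*s2) * s1 ≤ (a*s1 - q1) * (s2*(s1+s2-a)) := by
    rcases le_or_gt (q2*(s1-a) - (q1-a^2)*s2) 0 with hE | hE
    · nlinarith [mul_nonneg (sub_nonneg.2 hq1) (mul_nonneg hs2.le h3.le),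
        mul_nonneg (neg_nonneg.2 hE) hs1.le]
    · rcases le_or_gt a s2 with hc | hc
      · nlinarith [mul_le_mul hED (show s1 ≤ s1+s2-a by linarith) hs1.le
          (mul_nonneg hs2.le (sub_nonneg.2 hq1))]
      · nlinarith [mul_le_mul_of_nonneg_right hED (sub_nonneg.2 has1),
          mul_le_mul_of_nonneg_left hq2s (mul_nonneg ha.le (sub_nonneg.2 has1)),
          mul_le_mul_of_nonneg_left hc.le (mul_nonneg (sub_nonneg.2 hq1a) hs2.le)]
  have hid : (s1 - q1/s1) + (s2 - q2/s2) - ((s1+s2-a) - (q1+q2-a^2)/(s1+s2-a)) =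
      ((a*s1 - q1)*(s2*(s1+s2-a)) - (q2*(s1-a)-(q1-a^2)*s2)*s1) / (s1*(s2*(s1+s2-a))) := by
    field_simp
    ring
  have hdiv : 0 ≤ ((a*s1 - q1)*(s2*(s1+s2-a)) - (q2*(s1-a)-(q1-a^2)*s2)*s1) / (s1*(s2*(s1+s2-a))) :=
    div_nonneg (sub_nonneg.2 hpoly) (by positivity)
  linarith [hid ▸ hdiv]


lemma sq01 (x w : ℝ) (h : w = 0 ∨ w = 1) : (x*w)^2 = x^2 * w := by
  rcases h with h | h <;> rw [h] <;> ring

lemma auxIG {k : ℕ} (u z1 z2 : Fin k → ℝ)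
    (hdec : ∀ i j : Fin k, i ≤ j → u j ≤ u i) (hpos : ∀ i, 0 < u i)
    (h01a : ∀ i, z1 i = 0 ∨ z1 i = 1) (h01b : ∀ i, z2 i = 0 ∨ z2 i = 1)
    (hz2 : z2 ≠ 0)
    (hzero : ∀ i, z1 i * z2 i = 0)
    (istar : Fin k)
    (h1 : z1 istar = 1)
    (histar2 : ∀ j, (z1 j = 1 ∨ z2 j = 1) → istar ≤ j)
    (v1 v2 : Fin k → ℝ)
    (hv1 : v1 = fun j => if j = istar then (1 : ℝ) else 0)
    (hv2 : v2 = z1 + z2 - v1) :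
    IG (fun j => u j * v1 j) + IG (fun j => u j * v2 j) ≤
      IG (fun j => u j * z1 j) + IG (fun j => u j * z2 j) := by
  have h2 : z2 istar = 0 := by
    have := hzero istar; rw [h1, one_mul] at this; exact this
  set a := u istar with ha_def
  have ha : 0 < a := hpos istar
  -- componentwise nonnegativity / 0-1 facts
  have hz1n : ∀ i, 0 ≤ z1 i := fun i => by rcases h01a i with h|h <;> simp [h]
  have hz2n : ∀ i, 0 ≤ z2 i := fun i => by rcases h01b i with h|h <;> simp [h]
  have h01v2 : ∀ i, v2 i = 0 ∨ v2 i = 1 := by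
    intro i
    have hv2i : v2 i = z1 i + z2 i - v1 i := by rw [hv2]; simp
    by_cases hi : i = istar
    · subst hi; left; rw [hv2i, hv1, h1, h2]; simp
    · rw [hv2i, hv1]; simp only [hi, if_neg hi]
      have := hzero i
      rcases h01a i with hA|hA <;> rcases h01b i with hB|hB <;>
        simp [hA, hB] at this ⊢
  -- sums
  set s1 := ∑ i, u i * z1 i with hs1_def
  set q1 := ∑ i, (u i * z1 i)^2 with hq1_def
  set s2 := ∑ i, u i * z2 i with hs2_def
  set q2 := ∑ i, (u i * z2 i)^2 with hq2_def
  have hsum_v1 : ∑ i, u i * v1 i = a := by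
    rw [hv1]
    simp [mul_ite, ha_def]
  have hsumsq_v1 : ∑ i, (u i * v1 i)^2 = a^2 := by
    rw [hv1]
    have : ∀ i, (u i * (if i = istar then (1:ℝ) else 0))^2
        = if i = istar then (u i)^2 else 0 := by
      intro i; split <;> simp
    simp only [this]
    simp [ha_def]
  have hsum_v2 : ∑ i, u i * v2 i = s1 + s2 - a := by
    have : ∀ i, u i * v2 i = u i * z1 i + u i * z2 i - u i * v1 i := by
      intro i
      have hv2i : v2 i = z1 i + z2 i - v1 i := by rw [hv2]; simp
      rw [hv2i]; ring
    simp only [this]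
    rw [Finset.sum_sub_distrib, Finset.sum_add_distrib, hsum_v1]
  have hsumsq_v2 : ∑ i, (u i * v2 i)^2 = q1 + q2 - a^2 := by
    have e1 : ∀ i, (u i * v2 i)^2 = (u i)^2 * z1 i + (u i)^2 * z2 i - (u i)^2 * v1 i := by
      intro i
      rw [sq01 _ _ (h01v2 i)]
      have hv2i : v2 i = z1 i + z2 i - v1 i := by rw [hv2]; simp
      rw [hv2i]; ring
    have e2 : ∀ i, (u i * z1 i)^2 = (u i)^2 * z1 i := fun i => sq01 _ _ (h01a i)
    have e3 : ∀ i, (u i * z2 i)^2 = (u i)^2 * z2 i := fun i => sq01 _ _ (h01b i)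
    have e4 : ∀ i, (u i * v1 i)^2 = (u i)^2 * v1 i := by
      intro i; by_cases hi : i = istar <;> simp [hv1, hi]
    calc ∑ i, (u i * v2 i)^2
        = ∑ i, ((u i * z1 i)^2 + (u i * z2 i)^2 - (u i * v1 i)^2) := by
          apply Finset.sum_congr rfl; intro i _; rw [e1 i, e2 i, e3 i, e4 i]
      _ = q1 + q2 - a^2 := by
          rw [Finset.sum_sub_distrib, Finset.sum_add_distrib, hsumsq_v1]
  -- inequalities
  have has1 : a ≤ s1 := by
    have h := Finset.single_le_sum (f := fun i => u i * z1 i)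
      (fun i _ => mul_nonneg (hpos i).le (hz1n i)) (Finset.mem_univ istar)
    simpa [h1] using h
  have hq1a : a^2 ≤ q1 := by
    have h := Finset.single_le_sum (f := fun i => (u i * z1 i)^2)
      (fun i _ => sq_nonneg _) (Finset.mem_univ istar)
    simpa [h1] using h
  have hub1 : ∀ j, z1 j = 1 → u j ≤ a := fun j hj => hdec istar j (histar2 j (Or.inl hj))
  have hub2 : ∀ j, z2 j = 1 → u j ≤ a := fun j hj => hdec istar j (histar2 j (Or.inr hj))
  have hq1le : q1 ≤ a * s1 := by
    rw [Finset.mul_sum]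
    apply Finset.sum_le_sum
    intro i _
    rcases h01a i with h|h
    · simp [h]
    · rw [h, mul_one]
      nlinarith [hub1 i h, hpos i]
  have hq2le : q2 ≤ a * s2 := by
    rw [Finset.mul_sum]
    apply Finset.sum_le_sum
    intro i _
    rcases h01b i with h|h
    · simp [h]
    · rw [h, mul_one]
      nlinarith [hub2 i h, hpos i]
  have hs2pos : 0 < s2 := by
    obtain ⟨j, hj⟩ := Function.ne_iff.1 hz2
    simp only [Pi.zero_apply] at hj
    have hj1 : z2 j = 1 := (h01b j).resolve_left hj
    have h := Finset.single_le_sum (f := fun i => u i * z2 i)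
      (fun i _ => mul_nonneg (hpos i).le (hz2n i)) (Finset.mem_univ j)
    simp only [hj1, mul_one] at h
    exact lt_of_lt_of_le (hpos j) h
  have hq2s : q2 ≤ s2^2 := by
    have : ∀ i ∈ Finset.univ, (u i * z2 i)^2 ≤ (u i * z2 i) * s2 := by
      intro i _
      rw [sq]
      apply mul_le_mul_of_nonneg_left _ (mul_nonneg (hpos i).le (hz2n i))
      exact Finset.single_le_sum (f := fun i => u i * z2 i)
        (fun i _ => mul_nonneg (hpos i).le (hz2n i)) (Finset.mem_univ i)
    calc q2 ≤ ∑ i, (u i * z2 i) * s2 := Finset.sum_le_sum this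
      _ = s2^2 := by rw [← Finset.sum_mul]; ring
  -- put together
  have hIGv1 : IG (fun j => u j * v1 j) = 0 := by
    unfold IG
    rw [hsum_v1, hsumsq_v1, sq, mul_div_assoc, div_self ha.ne', mul_one, sub_self]
  have hIGv2 : IG (fun j => u j * v2 j) = (s1 + s2 - a) - (q1 + q2 - a^2)/(s1 + s2 - a) := by
    unfold IG
    rw [hsum_v2, hsumsq_v2]
  have hIGz1 : IG (fun j => u j * z1 j) = s1 - q1/s1 := rfl
  have hIGz2 : IG (fun j => u j * z2 j) = s2 - q2/s2 := rfl
  rw [hIGv1, hIGv2, hIGz1, hIGz2, zero_add]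
  exact key' a s1 s2 q1 q2 ha has1 hs2pos hq1a hq1le hq2le hq2s

/-- Gini exchange claim: for `u₁ ≥ ⋯ ≥ u_k > 0`, nonzero orthogonal `z⁽¹⁾, z⁽²⁾ ∈ {0,1}^k`,
`i*` the least index covered by `z⁽¹⁾` or `z⁽²⁾`, `v⁽¹⁾ = e_{i*}` and
`v⁽²⁾ = z⁽¹⁾ + z⁽²⁾ − e_{i*}` (nonzero), we have
`I_Gini(u∘v⁽¹⁾) + I_Gini(u∘v⁽²⁾) ≤ I_Gini(u∘z⁽¹⁾) + I_Gini(u∘z⁽²⁾)`. -/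
theorem stmt10 {k : ℕ} (u z1 z2 : Fin k → ℝ)
    (hdec : ∀ i j : Fin k, i ≤ j → u j ≤ u i) (hpos : ∀ i, 0 < u i)
    (h01a : ∀ i, z1 i = 0 ∨ z1 i = 1) (h01b : ∀ i, z2 i = 0 ∨ z2 i = 1)
    (hz1 : z1 ≠ 0) (hz2 : z2 ≠ 0)
    (horth : ∑ i, z1 i * z2 i = 0)
    (istar : Fin k)
    (histar1 : z1 istar = 1 ∨ z2 istar = 1)
    (histar2 : ∀ j, (z1 j = 1 ∨ z2 j = 1) → istar ≤ j)
    (v1 v2 : Fin k → ℝ)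
    (hv1 : v1 = fun j => if j = istar then (1 : ℝ) else 0)
    (hv2 : v2 = z1 + z2 - v1) (hv2ne : v2 ≠ 0) :
    IG (fun j => u j * v1 j) + IG (fun j => u j * v2 j) ≤
      IG (fun j => u j * z1 j) + IG (fun j => u j * z2 j) := by
  have hzero : ∀ i, z1 i * z2 i = 0 := by
    have hn : ∀ j ∈ Finset.univ, 0 ≤ z1 j * z2 j := fun j _ =>
      mul_nonneg (by rcases h01a j with h|h <;> simp [h])
        (by rcases h01b j with h|h <;> simp [h])
    exact fun i => (Finset.sum_eq_zero_iff_of_nonneg hn).1 horth i (Finset.mem_univ i)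
  rcases histar1 with h1 | h1
  · exact auxIG u z1 z2 hdec hpos h01a h01b hz2 hzero istar h1 histar2 v1 v2 hv1 hv2
  · have hzero' : ∀ i, z2 i * z1 i = 0 := fun i => by rw [mul_comm]; exact hzero i
    have histar2' : ∀ j, (z2 j = 1 ∨ z1 j = 1) → istar ≤ j := fun j h => histar2 j h.symm
    have hv2' : v2 = z2 + z1 - v1 := by rw [hv2, add_comm z1 z2]
    have h := auxIG u z2 z1 hdec hpos h01b h01a hz1 hzero' istar h1 histar2' v1 v2 hv1 hv2'
    linarith
end

section
/- Dominance algorithm guarantee: Let V be a finite set of nonzero vectors in ℝ₊^k, let I be an impurity measure, and suppose there exist α, β > 0 such that for every nonempty S ⊆ V, writing u^S = Σ_{v∈S} v, we have β(‖u^S‖₁ − ‖u^S‖_∞) ≤ I(u^S) ≤ α(‖u^S‖₁ − ‖u^S‖_∞). Partition V into groups V⁽¹⁾,…,V⁽ᵏ⁾ where V⁽ⁱ⁾ consists of the vectors whose i-th coordinate equals their ℓ_∞ norm (ties broken arbitrarily). Then Σᵢ I(Σ_{v∈V⁽ⁱ⁾} v) ≤ (α/β) · Σ_{v∈V} I(v).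 -/
/-- Dominance algorithm guarantee: if the impurity `I` is sandwiched, for every nonempty
`S ⊆ V`, between `β(‖u^S‖₁ − ‖u^S‖_∞)` and `α(‖u^S‖₁ − ‖u^S‖_∞)` where `u^S = Σ_{v∈S} v`,
then the partition of `V` by dominant coordinate (assignment `c`, ties arbitrary) has total
impurity at most `(α/β)·Σ_{v∈V} I(v)`. -/
theorem stmt13 {k : ℕ} [NeZero k] (V : Finset (Fin k → ℝ))
    (hV : ∀ v ∈ V, (∀ i, 0 ≤ v i) ∧ v ≠ 0)
    (I : (Fin k → ℝ) → ℝ) (α β : ℝ) (hα : 0 < α) (hβ : 0 < β)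
    (hbound : ∀ S : Finset (Fin k → ℝ), S ⊆ V → S.Nonempty →
      β * ((∑ i, (∑ v ∈ S, v) i) -
            Finset.univ.sup' Finset.univ_nonempty (∑ v ∈ S, v)) ≤ I (∑ v ∈ S, v) ∧
      I (∑ v ∈ S, v) ≤
        α * ((∑ i, (∑ v ∈ S, v) i) -
              Finset.univ.sup' Finset.univ_nonempty (∑ v ∈ S, v)))
    (c : (Fin k → ℝ) → Fin k)
    (hc : ∀ v ∈ V, ∀ i, v i ≤ v (c v)) :
    ∑ i : Fin k,
        (if (V.filter (fun v => c v = i)).Nonempty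
          then I (∑ v ∈ V.filter (fun v => c v = i), v) else 0)
      ≤ (α / β) * ∑ v ∈ V, I v := by
  have key : ∀ v ∈ V, Finset.univ.sup' Finset.univ_nonempty v = v (c v) := by
    intro v hv
    apply le_antisymm
    · exact Finset.sup'_le _ _ fun i _ => hc v hv i
    · exact Finset.le_sup' v (Finset.mem_univ (c v))
  have h1 : ∀ i : Fin k,
      (if (V.filter (fun v => c v = i)).Nonempty
        then I (∑ v ∈ V.filter (fun v => c v = i), v) else 0)
      ≤ α * ∑ v ∈ V.filter (fun v => c v = i), ((∑ j, v j) - v (c v)) := by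
    intro i
    by_cases hne : (V.filter (fun v => c v = i)).Nonempty
    · simp only [hne, if_true]
      set S := V.filter (fun v => c v = i) with hS
      have hsub : S ⊆ V := Finset.filter_subset _ _
      have hb := (hbound S hsub hne).2
      refine hb.trans ?_
      apply mul_le_mul_of_nonneg_left _ hα.le
      have hsup : (∑ v ∈ S, v) i ≤ Finset.univ.sup' Finset.univ_nonempty (∑ v ∈ S, v) :=
        Finset.le_sup' _ (Finset.mem_univ i)
      have heq1 : ∑ j, (∑ v ∈ S, v) j = ∑ v ∈ S, ∑ j, v j := by
        simp only [Finset.sum_apply]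
        rw [Finset.sum_comm]
      have heq2 : (∑ v ∈ S, v) i = ∑ v ∈ S, v (c v) := by
        rw [Finset.sum_apply]
        refine Finset.sum_congr rfl fun v hv => ?_
        have hcv : c v = i := (Finset.mem_filter.mp hv).2
        rw [hcv]
      rw [Finset.sum_sub_distrib, ← heq1, ← heq2]
      linarith
    · simp only [hne, if_false]
      rw [Finset.not_nonempty_iff_eq_empty.mp hne]
      simp
  have hfiber : ∑ i : Fin k, ∑ v ∈ V.filter (fun v => c v = i), ((∑ j, v j) - v (c v))
      = ∑ v ∈ V, ((∑ j, v j) - v (c v)) :=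
    Finset.sum_fiberwise_of_maps_to (fun v _ => Finset.mem_univ (c v)) _
  have h2 : β * ∑ v ∈ V, ((∑ j, v j) - v (c v)) ≤ ∑ v ∈ V, I v := by
    rw [Finset.mul_sum]
    refine Finset.sum_le_sum fun v hv => ?_
    have hb := (hbound {v} (Finset.singleton_subset_iff.mpr hv)
      (Finset.singleton_nonempty v)).1
    simpa [key v hv] using hb
  calc ∑ i : Fin k,
        (if (V.filter (fun v => c v = i)).Nonempty
          then I (∑ v ∈ V.filter (fun v => c v = i), v) else 0)
      ≤ ∑ i : Fin k, α * ∑ v ∈ V.filter (fun v => c v = i), ((∑ j, v j) - v (c v)) :=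
        Finset.sum_le_sum fun i _ => h1 i
    _ = α * ∑ v ∈ V, ((∑ j, v j) - v (c v)) := by rw [← Finset.mul_sum, hfiber]
    _ = (α / β) * (β * ∑ v ∈ V, ((∑ j, v j) - v (c v))) := by
        field_simp
    _ ≤ (α / β) * ∑ v ∈ V, I v :=
        mul_le_mul_of_nonneg_left h2 (div_nonneg hα.le hβ.le)
end

section
/- Let v ∈ ℝ₊^k with ‖v‖₁ > 0 and ‖v‖_∞ ≥ ‖v‖₁/2. Then I_Ent(v) ≤ ‖v‖_∞·log(‖v‖₁/‖v‖_∞) + (‖v‖₁−‖v‖_∞)·log(‖v‖₁/(‖v‖₁−‖v‖_∞)) + (‖v‖₁−‖v‖_∞)·log(k−1) ≤ 2(‖v‖₁−‖v‖_∞)·log(k‖v‖₁/(‖v‖₁−‖v‖_∞)), where the last right-hand side is interpreted as 0 when ‖v‖₁ = ‖v‖_∞. -/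
lemma aux_sum_log {ι : Type*} [DecidableEq ι] (T : Finset ι) (w : ι → ℝ)
    (hw : ∀ i ∈ T, 0 ≤ w i) (c : ℝ) (hc : 0 < c) (hW : 0 < ∑ i ∈ T, w i) :
    ∑ i ∈ T, w i * Real.log (c / w i) ≤
      (∑ i ∈ T, w i) * Real.log (c * T.card / (∑ i ∈ T, w i)) := by
  set W := ∑ i ∈ T, w i with hWdef
  have hT : T.Nonempty := by
    by_contra h
    rw [Finset.not_nonempty_iff_eq_empty] at h
    simp [hWdef, h] at hW
  have hn : 0 < (T.card : ℝ) := by exact_mod_cast Finset.card_pos.mpr hT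
  have key : ∀ i ∈ T, w i * Real.log (c / w i) ≤
      w i * Real.log (c * T.card / W) + (W / T.card - w i) := by
    intro i hi
    rcases eq_or_lt_of_le (hw i hi) with h0 | h0
    · rw [← h0]
      simp
      positivity
    · have h1 : Real.log (W / (T.card * w i)) ≤ W / (T.card * w i) - 1 :=
        Real.log_le_sub_one_of_pos (by positivity)
      have h2 : c / w i = (c * T.card / W) * (W / (T.card * w i)) := by
        field_simp
      rw [h2, Real.log_mul (by positivity) (by positivity)]
      have h3 : w i * Real.log (W / (T.card * w i)) ≤ W / T.card - w i := by
        have := mul_le_mul_of_nonneg_left h1 h0.le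
        have h4 : w i * (W / (T.card * w i) - 1) = W / T.card - w i := by
          field_simp
        linarith
      nlinarith [h3]
  calc ∑ i ∈ T, w i * Real.log (c / w i)
      ≤ ∑ i ∈ T, (w i * Real.log (c * T.card / W) + (W / T.card - w i)) :=
        Finset.sum_le_sum key
    _ = W * Real.log (c * T.card / W) := by
        rw [Finset.sum_add_distrib, ← Finset.sum_mul, Finset.sum_sub_distrib,
          Finset.sum_const, ← hWdef]
        have : (T.card : ℕ) • (W / (T.card:ℝ)) = W := by
          rw [nsmul_eq_mul]
          field_simp
        rw [this]
        ring

set_option maxHeartbeats 1000000 in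
/-- For `v ∈ ℝ₊^k` with `‖v‖₁ > 0` and `‖v‖_∞ ≥ ‖v‖₁/2`:
`I_Ent(v) ≤ ‖v‖_∞·log(‖v‖₁/‖v‖_∞) + (‖v‖₁−‖v‖_∞)·log(‖v‖₁/(‖v‖₁−‖v‖_∞))
  + (‖v‖₁−‖v‖_∞)·log(k−1) ≤ 2(‖v‖₁−‖v‖_∞)·log(k‖v‖₁/(‖v‖₁−‖v‖_∞))`
(the right-hand sides are `0` when `‖v‖₁ = ‖v‖_∞`, by Lean's conventions). -/
theorem stmt14 {k : ℕ} [NeZero k] (hk : 2 ≤ k) (v : Fin k → ℝ) (hv : ∀ i, 0 ≤ v i)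
    (hS : 0 < ∑ i, v i) (hM : (∑ i, v i) / 2 ≤ linf v) :
    IEnt v ≤
      linf v * Real.logb 2 ((∑ i, v i) / linf v) +
        ((∑ i, v i) - linf v) * Real.logb 2 ((∑ i, v i) / ((∑ i, v i) - linf v)) +
        ((∑ i, v i) - linf v) * Real.logb 2 ((k : ℝ) - 1) ∧
    linf v * Real.logb 2 ((∑ i, v i) / linf v) +
        ((∑ i, v i) - linf v) * Real.logb 2 ((∑ i, v i) / ((∑ i, v i) - linf v)) +
        ((∑ i, v i) - linf v) * Real.logb 2 ((k : ℝ) - 1) ≤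
      2 * ((∑ i, v i) - linf v) *
        Real.logb 2 ((k : ℝ) * (∑ i, v i) / ((∑ i, v i) - linf v)) := by
  have hlog2 : (0:ℝ) < Real.log 2 := Real.log_pos one_lt_two
  set S := ∑ i, v i with hSdef
  set M := linf v with hMdef
  obtain ⟨i₀, -, hMv⟩ := Finset.exists_mem_eq_sup' (Finset.univ_nonempty (α := Fin k)) v
  have hMv : M = v i₀ := hMv
  have hM0 : 0 < M := lt_of_lt_of_le (by positivity) hM
  have hR_eq : ∑ i ∈ Finset.univ.erase i₀, v i = S - M := by
    have h := Finset.sum_erase_add Finset.univ v (Finset.mem_univ i₀)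
    rw [hMv, hSdef]
    linarith [h]
  have hR0 : 0 ≤ S - M := by
    rw [← hR_eq]
    exact Finset.sum_nonneg fun i _ => hv i
  have hRS : S - M ≤ S / 2 := by linarith
  have hkR : (1:ℝ) ≤ (k:ℝ) - 1 := by
    have : (2:ℝ) ≤ (k:ℝ) := by exact_mod_cast hk
    linarith
  have hk0 : (0:ℝ) < (k:ℝ) := by linarith
  -- IEnt in terms of Real.log
  have hIEnt : IEnt v = (∑ i, v i * Real.log (S / v i)) / Real.log 2 := by
    unfold IEnt
    rw [Finset.sum_div]
    exact Finset.sum_congr rfl fun i _ => by rw [Real.logb, mul_div_assoc]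
  -- key1 : ln-version of the first inequality
  have key1 : ∑ i, v i * Real.log (S / v i) ≤
      M * Real.log (S / M) + (S - M) * Real.log (S / (S - M)) +
        (S - M) * Real.log ((k:ℝ) - 1) := by
    have hsplit : ∑ i, v i * Real.log (S / v i) =
        v i₀ * Real.log (S / v i₀) + ∑ i ∈ Finset.univ.erase i₀, v i * Real.log (S / v i) := by
      exact (Finset.add_sum_erase Finset.univ (fun i => v i * Real.log (S / v i))
        (Finset.mem_univ i₀)).symm
    rcases eq_or_lt_of_le hR0 with hR | hR
    · -- S = M
      have hz : ∀ i ∈ Finset.univ.erase i₀, v i = 0 := by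
        intro i hi
        have := (Finset.sum_eq_zero_iff_of_nonneg (fun i _ => hv i)).mp (by linarith [hR_eq]) i hi
        exact this
      have hsum0 : ∑ i ∈ Finset.univ.erase i₀, v i * Real.log (S / v i) = 0 :=
        Finset.sum_eq_zero fun i hi => by rw [hz i hi]; ring
      have hSM : S = M := by linarith
      rw [hsplit, hsum0, ← hMv, hSM, div_self hM0.ne', Real.log_one]
      simp
    · have hcard : ((Finset.univ.erase i₀).card : ℝ) = (k:ℝ) - 1 := by
        rw [Finset.card_erase_of_mem (Finset.mem_univ i₀), Finset.card_univ, Fintype.card_fin]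
        have : 1 ≤ k := by omega
        push_cast [this]
        ring
      have haux := aux_sum_log (Finset.univ.erase i₀) v (fun i _ => hv i) S hS
        (by rw [hR_eq]; exact hR)
      rw [hR_eq, hcard] at haux
      have hlogsplit : Real.log (S * ((k:ℝ) - 1) / (S - M)) =
          Real.log (S / (S - M)) + Real.log ((k:ℝ) - 1) := by
        rw [show S * ((k:ℝ) - 1) / (S - M) = (S / (S - M)) * ((k:ℝ) - 1) by ring,
          Real.log_mul (by positivity) (by linarith)]
      rw [hlogsplit] at haux
      rw [hsplit, ← hMv]
      nlinarith [haux]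
  -- key2 : ln-version of the second inequality
  have key2 : M * Real.log (S / M) + (S - M) * Real.log (S / (S - M)) +
        (S - M) * Real.log ((k:ℝ) - 1) ≤
      2 * (S - M) * Real.log ((k:ℝ) * S / (S - M)) := by
    rcases eq_or_lt_of_le hR0 with hR | hR
    · have hSM : S = M := by linarith
      rw [← hR, hSM, div_self hM0.ne', Real.log_one]
      simp
    · set R := S - M with hRdef
      have ha : M * Real.log (S / M) ≤ R := by
        have h1 : Real.log (S / M) ≤ S / M - 1 :=
          Real.log_le_sub_one_of_pos (by positivity)
        have h2 : M * (S / M) = S := by field_simp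
        nlinarith
      have hb : (1:ℝ) ≤ Real.log ((k:ℝ) * S / R) := by
        rw [show (1:ℝ) = Real.log (Real.exp 1) by rw [Real.log_exp]]
        apply Real.log_le_log (Real.exp_pos 1)
        have he : Real.exp 1 < 2.7182818286 := Real.exp_one_lt_d9
        rw [le_div_iff₀ hR]
        nlinarith
      have hc : Real.log (S / R) + Real.log ((k:ℝ) - 1) ≤ Real.log ((k:ℝ) * S / R) := by
        rw [← Real.log_mul (by positivity) (by linarith)]
        apply Real.log_le_log (by positivity)
        rw [div_mul_eq_mul_div, div_le_div_iff₀ hR hR]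
        nlinarith
      nlinarith [ha, hb, hc, hR]
  clear_value S M
  have conv1 : ∀ a x : ℝ, a * Real.logb 2 x = a * Real.log x / Real.log 2 := by
    intro a x
    rw [← Real.log_div_log]
    ring
  constructor
  · rw [hIEnt, conv1, conv1, conv1, ← add_div, ← add_div]
    exact div_le_div_of_nonneg_right key1 hlog2.le
  · rw [conv1, conv1, conv1, conv1, ← add_div, ← add_div]
    exact div_le_div_of_nonneg_right key2 hlog2.le
end

section
/- Two-dimensional entropy impurity bound: for a nonzero vector u ∈ ℝ₊², if α = min{u₁, u₂} then α·log(‖u‖₁/α) ≤ I_Ent(u) ≤ 2α·log(‖u‖₁/α), provided α > 0. -/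
lemma key_log (a b : ℝ) (ha : 0 < a) (hab : a ≤ b) :
    b * Real.log ((a + b) / b) ≤ a * Real.log ((a + b) / a) := by
  have hb : 0 < b := lt_of_lt_of_le ha hab
  have hL : Real.log ((a + b) / b) ≤ a / b := by
    have h := Real.log_le_sub_one_of_pos (show (0:ℝ) < (a + b) / b by positivity)
    have : (a + b) / b - 1 = a / b := by field_simp; ring
    linarith [this ▸ h]
  have hL0 : 0 ≤ Real.log ((a + b) / b) :=
    Real.log_nonneg (by rw [le_div_iff₀ hb]; linarith)
  have hM : 1 - a / b ≤ Real.log (b / a) := by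
    have h := Real.log_le_sub_one_of_pos (show (0:ℝ) < a / b by positivity)
    have hinv : Real.log (a / b) = -Real.log (b / a) := by
      rw [← Real.log_inv, inv_div]
    rw [hinv] at h; linarith
  have hsplit : Real.log ((a + b) / a) = Real.log ((a + b) / b) + Real.log (b / a) := by
    rw [← Real.log_mul (by positivity) (by positivity)]
    congr 1; field_simp
  rw [hsplit]
  have hba : 0 ≤ b - a := by linarith
  have h1 : (b - a) * Real.log ((a + b) / b) ≤ (b - a) * (a / b) :=
    mul_le_mul_of_nonneg_left hL hba
  have h2 : a * (1 - a / b) ≤ a * Real.log (b / a) :=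
    mul_le_mul_of_nonneg_left hM ha.le
  have h3 : (b - a) * (a / b) = a * (1 - a / b) := by field_simp
  nlinarith

lemma key_case (a b : ℝ) (ha : 0 < a) (hab : a ≤ b) :
    a * Real.logb 2 ((a + b) / a) ≤
        a * Real.logb 2 ((a + b) / a) + b * Real.logb 2 ((a + b) / b) ∧
    a * Real.logb 2 ((a + b) / a) + b * Real.logb 2 ((a + b) / b) ≤
        2 * a * Real.logb 2 ((a + b) / a) := by
  have hb : 0 < b := lt_of_lt_of_le ha hab
  have hge : (1:ℝ) ≤ (a + b) / b := by rw [le_div_iff₀ hb]; linarith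
  have hnn : 0 ≤ b * Real.logb 2 ((a + b) / b) :=
    mul_nonneg hb.le (Real.logb_nonneg one_lt_two hge)
  constructor
  · linarith
  · have hkey : b * Real.logb 2 ((a + b) / b) ≤ a * Real.logb 2 ((a + b) / a) := by
      have h := key_log a b ha hab
      have hlog2 : 0 < Real.log 2 := Real.log_pos one_lt_two
      simp only [Real.logb, ← mul_div_assoc]
      gcongr
    linarith

/-- Two-dimensional entropy impurity bound: for `u ∈ ℝ₊²` with `α = min{u₁,u₂} > 0`,
`α·log(‖u‖₁/α) ≤ I_Ent(u) ≤ 2α·log(‖u‖₁/α)`. -/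
theorem stmt15 (u1 u2 : ℝ) (h1 : 0 ≤ u1) (h2 : 0 ≤ u2) (hα : 0 < min u1 u2) :
    min u1 u2 * Real.logb 2 ((u1 + u2) / min u1 u2) ≤
        u1 * Real.logb 2 ((u1 + u2) / u1) + u2 * Real.logb 2 ((u1 + u2) / u2) ∧
    u1 * Real.logb 2 ((u1 + u2) / u1) + u2 * Real.logb 2 ((u1 + u2) / u2) ≤
        2 * (min u1 u2) * Real.logb 2 ((u1 + u2) / min u1 u2) := by
  rcases le_total u1 u2 with h | h
  · rw [min_eq_left h]
    have hu1 : 0 < u1 := by rw [min_eq_left h] at hα; exact hα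
    exact key_case u1 u2 hu1 h
  · rw [min_eq_right h]
    have hu2 : 0 < u2 := by rw [min_eq_right h] at hα; exact hα
    obtain ⟨hl, hr⟩ := key_case u2 u1 hu2 h
    rw [add_comm u2 u1] at hl hr
    constructor <;> linarith
end

section
/- Let u₁ ≥ u₂ ≥ ⋯ ≥ u_L > 0 and X₁, …, X_L ≥ 0 be reals such that for every s < L with X_s ≠ 0 we have u_L + X_L ≥ u_s. Then ((u_L + X_L) + Σ_{m=1}^{L−1} X_m) · Π_{m=1}^{L−1} u_m ≤ (u_L + X_L) · Π_{m=1}^{L−1} (u_m + X_m). -/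
lemma stmt16_aux (A : ℝ) (hA : 0 < A) (u X : ℕ → ℝ) (S : Finset ℕ)
    (hu : ∀ m ∈ S, 0 < u m) (hX : ∀ m ∈ S, 0 ≤ X m)
    (hk : ∀ m ∈ S, X m ≠ 0 → u m ≤ A) :
    (A + ∑ m ∈ S, X m) * ∏ m ∈ S, u m ≤ A * ∏ m ∈ S, (u m + X m) := by
  induction S using Finset.induction with
  | empty => simp
  | @insert a S ha ih =>
    have hu' : ∀ m ∈ S, 0 < u m := fun m hm => hu m (Finset.mem_insert_of_mem hm)
    have hX' : ∀ m ∈ S, 0 ≤ X m := fun m hm => hX m (Finset.mem_insert_of_mem hm)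
    have hk' : ∀ m ∈ S, X m ≠ 0 → u m ≤ A := fun m hm => hk m (Finset.mem_insert_of_mem hm)
    have IH := ih hu' hX' hk'
    have hua : 0 < u a := hu a (Finset.mem_insert_self a S)
    have hXa : 0 ≤ X a := hX a (Finset.mem_insert_self a S)
    have hP : 0 < ∏ m ∈ S, u m := Finset.prod_pos hu'
    have hPQ : ∏ m ∈ S, u m ≤ ∏ m ∈ S, (u m + X m) :=
      Finset.prod_le_prod (fun m hm => le_of_lt (hu' m hm))
        (fun m hm => by linarith [hX' m hm])
    have hs : 0 ≤ ∑ m ∈ S, X m := Finset.sum_nonneg hX'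
    rw [Finset.sum_insert ha, Finset.prod_insert ha, Finset.prod_insert ha]
    have key : X a * u a * ∏ m ∈ S, u m ≤ X a * A * ∏ m ∈ S, (u m + X m) := by
      rcases eq_or_ne (X a) 0 with h | h
      · simp [h]
      · have huA : u a ≤ A := hk a (Finset.mem_insert_self a S) h
        have hXa' : 0 < X a := lt_of_le_of_ne hXa (Ne.symm h)
        gcongr
    nlinarith

/-- Product inequality: for `u₁ ≥ ⋯ ≥ u_L > 0` and `X₁, …, X_L ≥ 0` such that
`u_L + X_L ≥ u_s` whenever `s < L` and `X_s ≠ 0`, we have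
`((u_L + X_L) + Σ_{m<L} X_m)·Π_{m<L} u_m ≤ (u_L + X_L)·Π_{m<L} (u_m + X_m)`. -/
theorem stmt16 (L : ℕ) (hL : 1 ≤ L) (u X : ℕ → ℝ)
    (hpos : ∀ m ∈ Finset.Icc 1 L, 0 < u m)
    (hdec : ∀ m ∈ Finset.Icc 1 (L - 1), u (m + 1) ≤ u m)
    (hX : ∀ m ∈ Finset.Icc 1 L, 0 ≤ X m)
    (hkey : ∀ s ∈ Finset.Icc 1 (L - 1), X s ≠ 0 → u s ≤ u L + X L) :
    ((u L + X L) + ∑ m ∈ Finset.Icc 1 (L - 1), X m) * ∏ m ∈ Finset.Icc 1 (L - 1), u m ≤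
      (u L + X L) * ∏ m ∈ Finset.Icc 1 (L - 1), (u m + X m) := by
  have hsub : Finset.Icc 1 (L - 1) ⊆ Finset.Icc 1 L := by
    apply Finset.Icc_subset_Icc_right; omega
  have hLmem : L ∈ Finset.Icc 1 L := by simp [hL]
  have hA : 0 < u L + X L := by
    have := hpos L hLmem; have := hX L hLmem; linarith
  exact stmt16_aux _ hA u X _ (fun m hm => hpos m (hsub hm))
    (fun m hm => hX m (hsub hm)) hkey
end

section
/- Comparing impurity to 2-dimensional projection (lower direction): let v ∈ ℝ₊^k be nonzero and u ∈ ℝ₊² be nonzero with ‖u‖₁ = ‖v‖₁ and min{u₁,u₂} ≤ ‖v‖₁ − ‖v‖_∞. If moreover ‖v‖₁ − ‖v‖_∞ ≤ ‖v‖₁/e, then I_Ent(u) ≤ 2·I_Ent(v). -/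
open Real Finset

-- pair superadditivity of f(x) = x * log (S/x)
lemma pair_superadd {S a b : ℝ} (hS : 0 < S) (ha : 0 ≤ a) (hb : 0 ≤ b) :
    (a + b) * Real.log (S / (a + b)) ≤ a * Real.log (S / a) + b * Real.log (S / b) := by
  rcases ha.eq_or_lt with rfl | ha
  · simp
  rcases hb.eq_or_lt with rfl | hb
  · simp
  have hab : 0 < a + b := by linarith
  have h1 : Real.log (S / (a + b)) ≤ Real.log (S / a) :=
    Real.log_le_log (by positivity) (by
      apply div_le_div_of_nonneg_left hS.le ha; linarith)
  have h2 : Real.log (S / (a + b)) ≤ Real.log (S / b) :=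
    Real.log_le_log (by positivity) (by
      apply div_le_div_of_nonneg_left hS.le hb; linarith)
  nlinarith [mul_le_mul_of_nonneg_left h1 ha.le, mul_le_mul_of_nonneg_left h2 hb.le]

lemma sum_superadd {k : ℕ} (v : Fin k → ℝ) (hv : ∀ i, 0 ≤ v i) {S : ℝ} (hS : 0 < S)
    (T : Finset (Fin k)) :
    (∑ i ∈ T, v i) * Real.log (S / ∑ i ∈ T, v i) ≤ ∑ i ∈ T, v i * Real.log (S / v i) := by
  induction T using Finset.induction with
  | empty => simp
  | @insert a T hnot ih =>
    rw [Finset.sum_insert hnot, Finset.sum_insert hnot]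
    calc (v a + ∑ i ∈ T, v i) * Real.log (S / (v a + ∑ i ∈ T, v i))
        ≤ v a * Real.log (S / v a) + (∑ i ∈ T, v i) * Real.log (S / ∑ i ∈ T, v i) :=
          pair_superadd hS (hv a) (Finset.sum_nonneg fun i _ => hv i)
      _ ≤ _ := by linarith

-- monotonicity: 0 < a ≤ b ≤ S / e  →  a log(S/a) ≤ b log(S/b)
lemma mono_f {S a b : ℝ} (hS : 0 < S) (ha : 0 < a) (hab : a ≤ b) (hb : b ≤ S / Real.exp 1) :
    a * Real.log (S / a) ≤ b * Real.log (S / b) := by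
  have hb0 : 0 < b := lt_of_lt_of_le ha hab
  have h1 : (1:ℝ) ≤ Real.log (S / b) := by
    rw [Real.le_log_iff_exp_le (by positivity)]
    rw [le_div_iff₀ hb0]
    calc Real.exp 1 * b ≤ Real.exp 1 * (S / Real.exp 1) := by
          apply mul_le_mul_of_nonneg_left hb (Real.exp_pos 1).le
      _ = S := by field_simp
  have h2 : Real.log (S / a) = Real.log (S / b) + Real.log (b / a) := by
    rw [← Real.log_mul (by positivity) (by positivity)]
    congr 1; field_simp
  have h3 : Real.log (b / a) ≤ b / a - 1 := Real.log_le_sub_one_of_pos (by positivity)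
  have h4 : a * Real.log (b / a) ≤ b - a := by
    have h3' := mul_le_mul_of_nonneg_left h3 ha.le
    have e : a * (b / a - 1) = b - a := by field_simp
    linarith [e ▸ h3']
  have h5 : (b - a) * 1 ≤ (b - a) * Real.log (S / b) :=
    mul_le_mul_of_nonneg_left h1 (by linarith)
  nlinarith [mul_le_mul_of_nonneg_left h2.le ha.le]

-- two-term bound: 0 < a, 0 < b, a ≤ (a+b)/e → b log((a+b)/b) ≤ a log((a+b)/a)
lemma two_term {a b : ℝ} (ha : 0 < a) (hb : 0 < b) (hae : a ≤ (a + b) / Real.exp 1) :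
    b * Real.log ((a + b) / b) ≤ a * Real.log ((a + b) / a) := by
  have hs : 0 < a + b := by linarith
  have h1 : Real.log ((a + b) / b) ≤ (a + b) / b - 1 :=
    Real.log_le_sub_one_of_pos (by positivity)
  have h2 : b * Real.log ((a + b) / b) ≤ a := by
    have := mul_le_mul_of_nonneg_left h1 hb.le
    have e : b * ((a + b) / b - 1) = a := by field_simp; ring
    nlinarith
  have h3 : (1:ℝ) ≤ Real.log ((a + b) / a) := by
    rw [Real.le_log_iff_exp_le (by positivity), le_div_iff₀ ha]
    calc Real.exp 1 * a ≤ Real.exp 1 * ((a + b) / Real.exp 1) :=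
          mul_le_mul_of_nonneg_left hae (Real.exp_pos 1).le
      _ = a + b := by field_simp
  nlinarith




lemma main_key {k : ℕ} [NeZero k] (v : Fin k → ℝ) (hv : ∀ i, 0 ≤ v i)
    (hS : 0 < ∑ i, v i) (a b : ℝ) (ha : 0 < a) (hb : 0 < b) (hab : a ≤ b)
    (hs : a + b = ∑ i, v i)
    (hmin : a ≤ (∑ i, v i) - linf v)
    (hcase : (∑ i, v i) - linf v ≤ (∑ i, v i) / Real.exp 1) :
    a * Real.log ((∑ i, v i) / a) + b * Real.log ((∑ i, v i) / b) ≤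
      2 * ∑ i, v i * Real.log ((∑ i, v i) / v i) := by
  set S := ∑ i, v i with hSdef
  set β := S - linf v with hβdef
  have hβa : a ≤ β := hmin
  have hβpos : 0 < β := lt_of_lt_of_le ha hβa
  have hae : a ≤ (a + b) / Real.exp 1 := by
    rw [hs]; exact le_trans (le_trans hβa hcase) (le_refl _)
  -- step 1: two-term bound
  have h1 : a * Real.log (S / a) + b * Real.log (S / b) ≤ 2 * (a * Real.log (S / a)) := by
    have := two_term ha hb hae
    rw [hs] at this
    linarith
  -- step 2: monotonicity
  have h2 : a * Real.log (S / a) ≤ β * Real.log (S / β) :=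
    mono_f hS ha hβa hcase
  -- step 3: lower bound on the entropy of v
  obtain ⟨i0, -, hi0⟩ := Finset.exists_mem_eq_sup' (Finset.univ_nonempty (α := Fin k)) v
  have hT : ∑ i ∈ Finset.univ.erase i0, v i = β := by
    rw [Finset.sum_erase_eq_sub (Finset.mem_univ i0), hβdef, hSdef]
    rw [linf, hi0]
  have hterm : ∀ i, 0 ≤ v i * Real.log (S / v i) := by
    intro i
    rcases (hv i).eq_or_lt with h | h
    · simp [← h]
    · have hvile : v i ≤ S := Finset.single_le_sum (fun j _ => hv j) (Finset.mem_univ i)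
      exact mul_nonneg (hv i) (Real.log_nonneg ((one_le_div h).2 hvile))
  have h3 : β * Real.log (S / β) ≤ ∑ i, v i * Real.log (S / v i) := by
    calc β * Real.log (S / β)
        = (∑ i ∈ Finset.univ.erase i0, v i) *
            Real.log (S / ∑ i ∈ Finset.univ.erase i0, v i) := by rw [hT]
      _ ≤ ∑ i ∈ Finset.univ.erase i0, v i * Real.log (S / v i) :=
          sum_superadd v hv hS _
      _ ≤ ∑ i, v i * Real.log (S / v i) :=
          Finset.sum_le_sum_of_subset_of_nonneg (Finset.erase_subset _ _)
            (fun i _ _ => hterm i)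
  linarith


/-- Projection comparison (Case 1): if `v ∈ ℝ₊^k` is nonzero, `u ∈ ℝ₊²` is nonzero with
`‖u‖₁ = ‖v‖₁` and `min{u₁,u₂} ≤ ‖v‖₁ − ‖v‖_∞`, and `‖v‖₁ − ‖v‖_∞ ≤ ‖v‖₁/e`, then
`I_Ent(u) ≤ 2·I_Ent(v)`. -/
theorem stmt19 {k : ℕ} [NeZero k] (v : Fin k → ℝ) (hv : ∀ i, 0 ≤ v i) (hv0 : v ≠ 0)
    (u1 u2 : ℝ) (hu1 : 0 ≤ u1) (hu2 : 0 ≤ u2) (hu0 : 0 < u1 + u2)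
    (hsum : u1 + u2 = ∑ i, v i)
    (hmin : min u1 u2 ≤ (∑ i, v i) - linf v)
    (hcase : (∑ i, v i) - linf v ≤ (∑ i, v i) / Real.exp 1) :
    u1 * Real.logb 2 ((u1 + u2) / u1) + u2 * Real.logb 2 ((u1 + u2) / u2) ≤
      2 * IEnt v := by
  have hS : 0 < ∑ i, v i := hsum ▸ hu0
  have hlog2 : 0 < Real.log 2 := Real.log_pos (by norm_num)
  have hterm : ∀ i, 0 ≤ v i * Real.log ((∑ j, v j) / v i) := by
    intro i
    rcases (hv i).eq_or_lt with h | h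
    · simp [← h]
    · have hvile : v i ≤ ∑ j, v j := Finset.single_le_sum (fun j _ => hv j) (Finset.mem_univ i)
      exact mul_nonneg (hv i) (Real.log_nonneg ((one_le_div h).2 hvile))
  have hIE : IEnt v = (∑ i, v i * Real.log ((∑ j, v j) / v i)) / Real.log 2 := by
    unfold IEnt
    rw [Finset.sum_div]
    exact Finset.sum_congr rfl fun i _ => by rw [Real.logb, mul_div_assoc]
  have hIEnn : 0 ≤ ∑ i, v i * Real.log ((∑ j, v j) / v i) :=
    Finset.sum_nonneg fun i _ => hterm i
  rcases (le_min hu1 hu2).eq_or_lt with hz | hpos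
  · -- min = 0 : one of u1, u2 is zero, LHS = 0
    have h0 : u1 = 0 ∨ u2 = 0 := by
      rcases le_total u1 u2 with h | h
      · left; rw [min_eq_left h] at hz; linarith
      · right; rw [min_eq_right h] at hz; linarith
    have hL : u1 * Real.logb 2 ((u1 + u2) / u1) + u2 * Real.logb 2 ((u1 + u2) / u2) = 0 := by
      rcases h0 with rfl | rfl
      · have h2 : u2 ≠ 0 := by intro h; rw [h] at hu0; simp at hu0
        simp [div_self h2]
      · have h2 : u1 ≠ 0 := by intro h; rw [h] at hu0; simp at hu0
        simp [div_self h2]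
    rw [hL, hIE]
    exact mul_nonneg (by norm_num) (div_nonneg hIEnn hlog2.le)
  · -- min > 0
    have hu1p : 0 < u1 := lt_of_lt_of_le hpos (min_le_left _ _)
    have hu2p : 0 < u2 := lt_of_lt_of_le hpos (min_le_right _ _)
    have key : u1 * Real.log ((∑ i, v i) / u1) + u2 * Real.log ((∑ i, v i) / u2) ≤
        2 * ∑ i, v i * Real.log ((∑ j, v j) / v i) := by
      rcases le_total u1 u2 with h | h
      · have := main_key v hv hS u1 u2 hu1p hu2p h hsum
          (by rwa [min_eq_left h] at hmin) hcase
        linarith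
      · have := main_key v hv hS u2 u1 hu2p hu1p h (by rw [← hsum]; ring)
          (by rwa [min_eq_right h] at hmin) hcase
        linarith
    have heq : u1 * Real.logb 2 ((u1 + u2) / u1) + u2 * Real.logb 2 ((u1 + u2) / u2) =
        (u1 * Real.log ((∑ i, v i) / u1) + u2 * Real.log ((∑ i, v i) / u2)) / Real.log 2 := by
      rw [hsum, Real.logb, Real.logb, add_div, mul_div_assoc, mul_div_assoc]
    rw [heq, hIE, ← mul_div_assoc]
    gcongr
end
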